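/- (Theorem 1.1, existence of consistent paths) Let x, y ∈ ℤ × ℤ be unimodular pairs with |det(x,y)| ≥ 2. Then for each sign ε ∈ {+1, −1} there exists a consistent path of sign ε from x to y in the distant graph. -/

import Mathlib

/-- The determinant of two integer vectors in the plane. -/
def det (x y : ℤ × ℤ) : ℤ := x.1 * y.2 - x.2 * y.1

/-- A path of length `n` from `x` to `y` in the distant graph of `P(ℤ)`, given by its
sequence of vertices `z 0 = x, …, z n = y`: all vertices are unimodular pairs,
consecutive vertices are distant (`|det| = 1`), and distinct indices give distinct
projective points (`z i ≠ ± z j`). -/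
def IsPath (x y : ℤ × ℤ) (n : ℕ) (z : ℕ → ℤ × ℤ) : Prop :=
  z 0 = x ∧ z n = y ∧
  (∀ i, i ≤ n → Int.gcd (z i).1 (z i).2 = 1) ∧
  (∀ i, i < n → |det (z i) (z (i + 1))| = 1) ∧
  (∀ i j, i ≤ n → j ≤ n → i ≠ j → z i ≠ z j ∧ z i ≠ -z j)

/-- A consistent path of sign `ε` from `x` to `y`: a path all of whose intermediate
vertices `z i = α • x + β • y` (coefficients over `ℚ`) satisfy `ε * α * β > 0`, i.e. they
all lie in the same pair of opposite open cones determined by `x` and `y`. -/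
def IsConsistentPath (x y : ℤ × ℤ) (ε : ℚ) (n : ℕ) (z : ℕ → ℤ × ℤ) : Prop :=
  IsPath x y n z ∧
  ∀ i, 0 < i → i < n → ∃ α β : ℚ,
    ((z i).1 : ℚ) = α * x.1 + β * y.1 ∧ ((z i).2 : ℚ) = α * x.2 + β * y.2 ∧
    ε * (α * β) > 0


lemma det_pluecker (a b c e : ℤ × ℤ) :
    det a b * det c e = det e b * det c a + det a e * det c b := by
  simp only [det]; ring

lemma det_smul_add_left (p q : ℤ) (u w y : ℤ × ℤ) :
    det (p * u.1 + q * w.1, p * u.2 + q * w.2) y = p * det u y + q * det w y := by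
  simp only [det]; ring

lemma det_smul_add_right (p q : ℤ) (x u w : ℤ × ℤ) :
    det x (p * u.1 + q * w.1, p * u.2 + q * w.2) = p * det x u + q * det x w := by
  simp only [det]; ring

lemma pos_of_mul_sq_pos {P d : ℤ} (h : 0 < P * d ^ 2) : 0 < P := by
  rcases mul_pos_iff.mp h with ⟨h1, _⟩ | ⟨_, h2⟩
  · exact h1
  · nlinarith [sq_nonneg d]

lemma gcd_dvd_det (x z : ℤ × ℤ) : (Int.gcd z.1 z.2 : ℤ) ∣ det x z := by
  exact dvd_sub (Dvd.dvd.mul_left (Int.gcd_dvd_right _ _) x.1)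
    (Dvd.dvd.mul_left (Int.gcd_dvd_left _ _) x.2)

lemma key : ∀ m : ℕ, ∀ x y : ℤ × ℤ, Int.gcd x.1 x.2 = 1 → Int.gcd y.1 y.2 = 1 →
    ∀ ε : ℤ, (ε = 1 ∨ ε = -1) → (det x y).natAbs = m → 1 ≤ m →
    ∃ n, 1 ≤ n ∧ ∃ z : ℕ → ℤ × ℤ, z 0 = x ∧ z n = y ∧
      (∀ i, i ≤ n → Int.gcd (z i).1 (z i).2 = 1) ∧
      (∀ i, i < n → |det (z i) (z (i + 1))| = 1) ∧
      (∀ i, 0 < i → i < n →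
        0 < det x (z i) * det x y ∧ 0 < ε * (det (z i) y * det x y)) ∧
      (∀ i j, i < j → j ≤ n → (det (z j) y).natAbs < (det (z i) y).natAbs) := by
  intro m
  induction m using Nat.strong_induction_on with
  | _ m IH =>
  intro x y hx hy ε hε hm hm1
  have hDne : det x y ≠ 0 := by
    intro h; rw [h] at hm; simp at hm; omega
  have hdyy : det y y = 0 := by simp [det]; ring
  by_cases hm2 : m = 1
  · -- base case : x and y are adjacent
    subst hm2
    refine ⟨1, le_refl _, fun i => if i = 0 then x else y, by simp, by simp, ?_, ?_, ?_, ?_⟩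
    · intro i hi; interval_cases i <;> simpa
    · intro i hi; interval_cases i
      norm_num
      rw [Int.abs_eq_natAbs, hm]; rfl
    · intro i hi1 hi2; omega
    · intro i j hij hj
      have hi : i = 0 := by omega
      have hj' : j = 1 := by omega
      subst hi; subst hj'
      simp only [if_pos rfl, if_neg one_ne_zero, hdyy]
      simp [hm]
  · -- inductive step, m ≥ 2
    have hm2' : 2 ≤ m := by omega
    obtain ⟨a, b, hab⟩ := (Int.isCoprime_iff_gcd_eq_one.mpr hx)
    set u : ℤ × ℤ := (-b, a) with hu
    have hxu : det x u = 1 := by simp [det, hu]; linarith [hab]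
    have hdyu : det y u = -det u y := by simp [det]; ring
    -- coprimality of det u y and D
    have hcop : Int.gcd (det u y) (det x y) = 1 := by
      have d1 : (Int.gcd (det u y) (det x y) : ℤ) ∣ det y u := by
        rw [hdyu]; exact dvd_neg.mpr (Int.gcd_dvd_left _ _)
      have h1 : (Int.gcd (det u y) (det x y) : ℤ) ∣ y.1 := by
        have hy1 : y.1 = det y u * x.1 + det x y * u.1 := by
          simp only [det, hu]; linear_combination (-y.1) * hab
        rw [hy1]
        exact dvd_add (d1.mul_right x.1) (dvd_mul_of_dvd_left (Int.gcd_dvd_right _ _) u.1)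
      have h2 : (Int.gcd (det u y) (det x y) : ℤ) ∣ y.2 := by
        have hy2 : y.2 = det y u * x.2 + det x y * u.2 := by
          simp only [det, hu]; linear_combination (-y.2) * hab
        rw [hy2]
        exact dvd_add (d1.mul_right x.2) (dvd_mul_of_dvd_left (Int.gcd_dvd_right _ _) u.2)
      have h3 : ((det u y).gcd (det x y) : ℤ) ∣ (1 : ℤ) := by
        have := Int.dvd_coe_gcd h1 h2
        rwa [hy, Nat.cast_one] at this
      exact Nat.dvd_one.mp (by exact_mod_cast h3)
    -- choose the determinant d of the next vertex with y
    have hMpos : (0:ℤ) < (m:ℤ) := by exact_mod_cast (by omega : 0 < m)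
    set σ : ℤ := if 0 < det x y then 1 else -1 with hσdef
    have hσ1 : σ = 1 ∨ σ = -1 := by rw [hσdef]; split <;> simp
    have hσ2 : σ * det x y = (m:ℤ) := by
      rw [hσdef]; split <;> omega
    obtain ⟨d, hεdD, hdabs, hdvd⟩ :
        ∃ d : ℤ, 0 < ε * (d * det x y) ∧ d.natAbs < m ∧
          det x y ∣ (d - σ * det u y) := by
      set c : ℤ := σ * det u y with hcdef
      have hMne : (m:ℤ) ≠ 0 := by omega
      have hr0 : 0 ≤ c % (m:ℤ) := Int.emod_nonneg c hMne
      have hrM : c % (m:ℤ) < (m:ℤ) := Int.emod_lt_of_pos c hMpos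
      have hrne : c % (m:ℤ) ≠ 0 := by
        intro h
        have hdvdc : (det x y) ∣ c := by
          rw [← Int.natAbs_dvd, hm]
          exact Int.dvd_of_emod_eq_zero h
        have hdvduy : (det x y) ∣ det u y := by
          rcases hσ1 with h1 | h1 <;> rw [hcdef, h1] at hdvdc
          · simpa using hdvdc
          · simpa using hdvdc
        have hunit : IsUnit (det x y) :=
          (Int.isCoprime_iff_gcd_eq_one.mpr hcop).isUnit_of_dvd' hdvduy dvd_rfl
        rcases Int.isUnit_iff.mp hunit with h2 | h2 <;> rw [h2] at hm <;> simp at hm <;> omega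
      have hMdvd : ((m:ℤ)) ∣ (c % (m:ℤ) - c) := ⟨-(c / (m:ℤ)), by rw [Int.emod_def]; ring⟩
      have hDdvd : ∀ e : ℤ, ((m:ℤ)) ∣ e → det x y ∣ e := by
        intro e he
        rw [← Int.natAbs_dvd, hm]; exact he
      have hσσ : σ * σ = 1 := by rcases hσ1 with h | h <;> rw [h] <;> ring
      by_cases hs : ε * σ = 1
      · refine ⟨c % (m:ℤ), ?_, by omega, hDdvd _ hMdvd⟩
        have hkey : ε * (c % (m:ℤ) * det x y) * (σ * σ) =
            ((ε * σ) * (c % (m:ℤ))) * (σ * det x y) := by ring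
        rw [hσσ, mul_one] at hkey
        rw [hkey, hσ2, hs, one_mul]
        have : 0 < c % (m:ℤ) := lt_of_le_of_ne hr0 (Ne.symm hrne)
        positivity
      · have hs' : ε * σ = -1 := by
          rcases hε with h | h <;> rcases hσ1 with h2 | h2 <;> rw [h, h2] at hs ⊢ <;>
            omega
        refine ⟨c % (m:ℤ) - (m:ℤ), ?_, by omega, hDdvd _ (by
          have : c % (m:ℤ) - (m:ℤ) - c = (c % (m:ℤ) - c) + (-1) * (m:ℤ) := by ring
          rw [this]
          exact dvd_add hMdvd ⟨-1, by ring⟩)⟩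
        have hkey : ε * ((c % (m:ℤ) - (m:ℤ)) * det x y) * (σ * σ) =
            ((ε * σ) * (c % (m:ℤ) - (m:ℤ))) * (σ * det x y) := by ring
        rw [hσσ, mul_one] at hkey
        rw [hkey, hσ2, hs']
        have h1 : 0 < -1 * (c % (m:ℤ) - (m:ℤ)) := by omega
        positivity
    -- build the first new vertex z₁
    have hdne0 : d ≠ 0 := by
      intro h; rw [h] at hεdD; simp at hεdD
    set t : ℤ := (d - σ * det u y) / det x y with htdef
    have ht : det x y * t = d - σ * det u y := Int.mul_ediv_cancel' hdvd
    set z₁ : ℤ × ℤ := (σ * u.1 + t * x.1, σ * u.2 + t * x.2) with hz₁def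
    have hdxx : det x x = 0 := by simp [det]; ring
    have hdxz₁ : det x z₁ = σ := by
      rw [hz₁def, det_smul_add_right, hxu, hdxx]; ring
    have hdz₁y : det z₁ y = d := by
      rw [hz₁def, det_smul_add_left]; linarith [ht]
    have hgz₁ : Int.gcd z₁.1 z₁.2 = 1 := by
      have h1 : (Int.gcd z₁.1 z₁.2 : ℤ) ∣ σ := hdxz₁ ▸ gcd_dvd_det x z₁
      have h2 : (Int.gcd z₁.1 z₁.2 : ℤ) ∣ 1 := by
        rcases hσ1 with h | h
        · rwa [h] at h1
        · rw [h, show ((-1:ℤ)) = -(1:ℤ) from rfl] at h1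
          exact (dvd_neg).mp h1
      exact Nat.dvd_one.mp (by exact_mod_cast h2)
    have habsσ : |σ| = 1 := by rcases hσ1 with h | h <;> rw [h] <;> norm_num
    have hdabs1 : 1 ≤ d.natAbs := by omega
    clear_value σ t z₁
    clear hσdef htdef hz₁def hu
    by_cases hd1 : d.natAbs = 1
    · -- d = ±1 : path x, z₁, y works
      refine ⟨2, by omega, fun i => if i = 0 then x else if i = 1 then z₁ else y,
        by norm_num, by norm_num, ?_, ?_, ?_, ?_⟩
      · intro i hi; interval_cases i
        · simpa using hx
        · simpa using hgz₁
        · simpa using hy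
      · intro i hi; interval_cases i
        · norm_num
          rw [hdxz₁]; exact habsσ
        · norm_num
          rw [hdz₁y, Int.abs_eq_natAbs, hd1]
          rfl
      · intro i h1 h2
        have hi : i = 1 := by omega
        subst hi
        norm_num
        constructor
        · rw [hdxz₁, hσ2]; exact hMpos
        · rw [hdz₁y]; exact hεdD
      · intro i j hij hj
        interval_cases j <;> interval_cases i <;> norm_num [hdyy, hdz₁y] <;> omega
    · -- d has absolute value ≥ 2 : recurse
      obtain ⟨n', hn', w, hw0, hwn, hwg, hwadj, hwmid, hwdec⟩ :=
        IH d.natAbs hdabs z₁ y hgz₁ hy 1 (Or.inl rfl) (by rw [hdz₁y]) (by omega)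
      refine ⟨n' + 1, by omega, fun i => if i = 0 then x else w (i - 1),
        by norm_num, ?_, ?_, ?_, ?_, ?_⟩
      · simp only [Nat.add_sub_cancel, if_neg (Nat.succ_ne_zero n')]
        exact hwn
      · intro i hi
        rcases Nat.eq_zero_or_pos i with h | h
        · subst h; simpa using hx
        · simp only [if_neg (by omega : ¬ i = 0)]
          exact hwg (i - 1) (by omega)
      · intro i hi
        rcases Nat.eq_zero_or_pos i with h | h
        · subst h
          norm_num [hw0, hdxz₁]
          exact habsσ
        · simp only [if_neg (by omega : ¬ i = 0), if_neg (by omega : ¬ i + 1 = 0)]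
          have : i + 1 - 1 = (i - 1) + 1 := by omega
          rw [this]
          exact hwadj (i - 1) (by omega)
      · intro i h1 h2
        simp only [if_neg (by omega : ¬ i = 0)]
        rcases Nat.eq_zero_or_pos (i - 1) with h | h
        · rw [h, hw0]
          constructor
          · rw [hdxz₁, hσ2]; exact hMpos
          · rw [hdz₁y]; exact hεdD
        · obtain ⟨hA, hB⟩ := hwmid (i - 1) h (by omega)
          rw [hdz₁y] at hA
          rw [one_mul, hdz₁y] at hB
          have hd2 : 0 < d ^ 2 := by positivity
          have hplk := det_pluecker z₁ y x (w (i - 1))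
          rw [hdz₁y, hdxz₁] at hplk
          have hσD : 0 < σ * det x y := hσ2 ▸ hMpos
          have hD2 : 0 < det x y ^ 2 := by positivity
          constructor
          · have hid : (det x (w (i - 1)) * det x y) * d ^ 2 =
                (det (w (i - 1)) y * d) * (σ * det x y) +
                (det z₁ (w (i - 1)) * d) * (det x y) ^ 2 := by
              linear_combination (d * det x y) * hplk
            have hpos : 0 < (det x (w (i - 1)) * det x y) * d ^ 2 := by
              rw [hid]; exact add_pos (mul_pos hB hσD) (mul_pos hA hD2)
            exact pos_of_mul_sq_pos hpos
          · have hid : (ε * (det (w (i - 1)) y * det x y)) * d ^ 2 =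
                (det (w (i - 1)) y * d) * (ε * (d * det x y)) := by ring
            have hpos : 0 < (ε * (det (w (i - 1)) y * det x y)) * d ^ 2 := by
              rw [hid]; exact mul_pos hB hεdD
            exact pos_of_mul_sq_pos hpos
      · intro i j hij hj
        simp only [if_neg (by omega : ¬ j = 0)]
        rcases Nat.eq_zero_or_pos i with h | h
        · subst h
          norm_num
          rcases Nat.eq_zero_or_pos (j - 1) with h2 | h2
          · rw [h2, hw0, hdz₁y]; omega
          · have := hwdec 0 (j - 1) h2 (by omega)
            rw [hw0, hdz₁y] at this
            omega
        · simp only [if_neg (by omega : ¬ i = 0)]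
          exact hwdec (i - 1) (j - 1) (by omega) (by omega)

/-- Theorem 1.1 (existence): for non-adjacent `x, y` and each sign `ε = ±1` there is a
consistent path of sign `ε` from `x` to `y` in the distant graph. -/
theorem exists_consistent_path (x y : ℤ × ℤ)
    (hx : Int.gcd x.1 x.2 = 1) (hy : Int.gcd y.1 y.2 = 1)
    (hdet : 2 ≤ |det x y|) (ε : ℚ) (hε : ε = 1 ∨ ε = -1) :
    ∃ n z, IsConsistentPath x y ε n z := by
  have hDne : det x y ≠ 0 := by
    intro h; rw [h] at hdet; norm_num at hdet
  obtain ⟨εz, hεz, hεz1⟩ : ∃ εz : ℤ, ε = (εz : ℚ) ∧ (εz = 1 ∨ εz = -1) := by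
    rcases hε with h | h
    · exact ⟨1, by rw [h]; norm_num, Or.inl rfl⟩
    · exact ⟨-1, by rw [h]; norm_num, Or.inr rfl⟩
  obtain ⟨n, hn, z, hz0, hzn, hg, hadj, hmid, hdec⟩ :=
    key (det x y).natAbs x y hx hy εz hεz1 rfl (by omega)
  have hne' : ∀ i j, i < j → j ≤ n → z i ≠ z j ∧ z i ≠ -z j := by
    intro i j hij hj
    have hd := hdec i j hij hj
    constructor
    · intro he; rw [he] at hd; exact lt_irrefl _ hd
    · intro he
      rw [he] at hd
      have hneg : det (-z j) y = -det (z j) y := by simp [det]; ring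
      rw [hneg, Int.natAbs_neg] at hd
      exact lt_irrefl _ hd
  refine ⟨n, z, ⟨⟨hz0, hzn, hg, hadj, ?_⟩, ?_⟩⟩
  · intro i j hi hj hij
    rcases Nat.lt_or_ge i j with h | h
    · exact hne' i j h hj
    · have h2 : j < i := by omega
      obtain ⟨ha, hb⟩ := hne' j i h2 hi
      refine ⟨fun he => ha he.symm, fun he => hb ?_⟩
      rw [he]; simp
  · intro i h0 hiN
    obtain ⟨h1, h2⟩ := hmid i h0 hiN
    have hDQ : ((det x y : ℤ) : ℚ) ≠ 0 := Int.cast_ne_zero.mpr hDne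
    refine ⟨(det (z i) y : ℚ) / (det x y : ℚ), (det x (z i) : ℚ) / (det x y : ℚ), ?_, ?_, ?_⟩
    · have hint : det (z i) y * x.1 + det x (z i) * y.1 = det x y * (z i).1 := by
        simp only [det]; ring
      have hQ : ((det (z i) y : ℤ) : ℚ) * x.1 + ((det x (z i) : ℤ) : ℚ) * y.1 =
          ((det x y : ℤ) : ℚ) * (z i).1 := by exact_mod_cast hint
      field_simp
      linear_combination -hQ
    · have hint : det (z i) y * x.2 + det x (z i) * y.2 = det x y * (z i).2 := by
        simp only [det]; ring
      have hQ : ((det (z i) y : ℤ) : ℚ) * x.2 + ((det x (z i) : ℤ) : ℚ) * y.2 =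
          ((det x y : ℤ) : ℚ) * (z i).2 := by exact_mod_cast hint
      field_simp
      linear_combination -hQ
    · have hP : (0:ℤ) < εz * (det (z i) y * det x (z i)) := by
        have hm := mul_pos h2 h1
        have e : (εz * (det (z i) y * det x y)) * (det x (z i) * det x y) =
            (εz * (det (z i) y * det x (z i))) * (det x y) ^ 2 := by ring
        rw [e] at hm
        exact pos_of_mul_sq_pos hm
      have e2 : ε * ((det (z i) y : ℚ) / (det x y : ℚ) * ((det x (z i) : ℚ) / (det x y : ℚ))) =
          ((εz * (det (z i) y * det x (z i)) : ℤ) : ℚ) / ((det x y : ℚ)) ^ 2 := by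
        rw [hεz, div_mul_div_comm, ← sq, ← mul_div_assoc]
        push_cast
        ring
      rw [gt_iff_lt, e2]
      apply div_pos
      · exact_mod_cast hP
      · positivity
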